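/- arXiv:2511.22560 — 2 statements merged into one kernel-verified Lean document; each statement's English description precedes it below -/
import Mathlib

section
/- The ring R = F₂[ρ, rᵢ : i ∈ ℕ]/(rᵢ² − ρ·r_{i+1} : i ∈ ℕ) is free as a module over the univariate polynomial ring F₂[ρ]: there exists an F₂[ρ]-basis of R indexed by the finite subsets S ⊆ ℕ whose S-th element is the residue class of the squarefree monomial ∏_{i∈S} rᵢ (the empty product being 1). -/
noncomputable section

/-- The base field `F₂ = ℤ/2ℤ`. -/
abbrev F2 := ZMod 2

/-- The polynomial ring `P = F₂[ρ, rᵢ : i ∈ ℕ]`; the variable `none` is `ρ`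
and the variable `some i` is `rᵢ`. -/
abbrev P := MvPolynomial (Option ℕ) F2

/-- The variable `ρ`. -/
def ρP : P := MvPolynomial.X none

/-- The variable `rᵢ`. -/
def rP (i : ℕ) : P := MvPolynomial.X (some i)

/-- The ideal `I = (rᵢ² − ρ·r_{i+1} : i ∈ ℕ)`. -/
def Irel : Ideal P := Ideal.span (Set.range fun i : ℕ => rP i ^ 2 - ρP * rP (i + 1))

/-- The quotient ring `R = P/I`. -/
abbrev R := P ⧸ Irel

/-- The residue class of `ρ` in `R`. -/
def ρR : R := Ideal.Quotient.mk Irel ρP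

/-- `R` as an algebra over the univariate polynomial ring `F₂[ρ]`, via `ρ ↦` class of `ρ`. -/
instance : Algebra (Polynomial F2) R :=
  (Polynomial.aeval ρR).toRingHom.toAlgebra

namespace RFreeAux

open Polynomial LaurentPolynomial

abbrev L := LaurentPolynomial F2
abbrev A := Polynomial L

/-- Where the variables go: `ρ ↦ T 1`, `rᵢ ↦ T(1-2^i)·X^(2^i)`. -/
def f : Option ℕ → A
  | none => Polynomial.C (T 1)
  | some i => Polynomial.C (T (1 - 2 ^ i : ℤ)) * Polynomial.X ^ (2 ^ i : ℕ)

def φ : P →ₐ[F2] A := MvPolynomial.aeval f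

lemma φ_ρ : φ ρP = Polynomial.C (T 1) := by
  simp [φ, ρP, f]

lemma φ_r (i : ℕ) : φ (rP i) =
    Polynomial.C (T (1 - 2 ^ i : ℤ)) * Polynomial.X ^ (2 ^ i : ℕ) := by
  simp [φ, rP, f]

lemma φ_rel (i : ℕ) : φ (rP i ^ 2 - ρP * rP (i + 1)) = 0 := by
  rw [map_sub, map_mul, map_pow, φ_ρ, φ_r, φ_r, sub_eq_zero,
    mul_pow, ← Polynomial.C_pow, T_pow, ← pow_mul, ← mul_assoc, ← map_mul, ← T_add]
  have e1 : ((2 : ℕ) : ℤ) * (1 - 2 ^ i) = 1 + (1 - 2 ^ (i + 1)) := by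
    push_cast [pow_succ]; ring
  have e2 : 2 ^ i * 2 = 2 ^ (i + 1) := by rw [pow_succ]
  rw [e1, e2]

lemma φ_vanish : ∀ a ∈ Irel, φ a = 0 := by
  intro a ha
  have : Irel ≤ RingHom.ker (φ : P →+* A) := by
    rw [Irel, Ideal.span_le]
    rintro x ⟨i, rfl⟩
    exact φ_rel i
  exact this ha

/-- The induced map on the quotient. -/
def φbar : R →ₐ[F2] A := Ideal.Quotient.liftₐ Irel φ φ_vanish

lemma φbar_mk (p : P) : φbar (Ideal.Quotient.mk Irel p) = φ p := rfl

/-- The squarefree monomial basis candidates. -/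
def v (S : Finset ℕ) : R := Ideal.Quotient.mk Irel (∏ i ∈ S, rP i)

lemma T_sum (S : Finset ℕ) (g : ℕ → ℤ) :
    (T (∑ i ∈ S, g i) : L) = ∏ i ∈ S, T (g i) := by
  classical
  induction S using Finset.cons_induction with
  | empty => simp
  | cons a s ha ih => rw [Finset.sum_cons, T_add, ih, Finset.prod_cons]

lemma φbar_v (S : Finset ℕ) :
    φbar (v S) = Polynomial.C (T (∑ i ∈ S, (1 - 2 ^ i : ℤ))) *
      Polynomial.X ^ (∑ i ∈ S, 2 ^ i : ℕ) := by
  rw [v, φbar_mk, map_prod]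
  simp only [φ_r]
  rw [Finset.prod_mul_distrib, ← map_prod, ← T_sum, Finset.prod_pow_eq_pow_sum]

lemma smul_def' (p : Polynomial F2) (x : R) :
    p • x = Polynomial.aeval ρR p * x := rfl

lemma φbar_ρR : φbar ρR = Polynomial.C (T 1) := φ_ρ

lemma φbar_aeval (p : Polynomial F2) :
    φbar (Polynomial.aeval ρR p) = Polynomial.C (Polynomial.toLaurent p) := by
  rw [← Polynomial.aeval_algHom_apply, φbar_ρR]
  have hC : Polynomial.C (T 1 : L) = (Polynomial.CAlgHom (R := F2)) (T 1 : L) := rfl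
  rw [hC, Polynomial.aeval_algHom_apply]
  have hT : (T 1 : L) = Polynomial.toLaurentAlg (Polynomial.X : Polynomial F2) := by
    simp [Polynomial.toLaurentAlg_apply]
  rw [hT, Polynomial.aeval_algHom_apply, Polynomial.aeval_X_left_apply]
  simp [Polynomial.toLaurentAlg_apply, Polynomial.CAlgHom]

lemma m_inj : Function.Injective (fun S : Finset ℕ => ∑ i ∈ S, 2 ^ i) :=
  Finset.geomSum_injective (le_refl 2)

lemma li : LinearIndependent (Polynomial F2) v := by
  rw [linearIndependent_iff']
  intro s g h S₀ hS₀
  have hterm : ∀ S : Finset ℕ, φbar (g S • v S) =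
      Polynomial.C (Polynomial.toLaurent (g S) * T (∑ i ∈ S, (1 - 2 ^ i : ℤ))) *
        Polynomial.X ^ (∑ i ∈ S, 2 ^ i : ℕ) := by
    intro S
    rw [smul_def', map_mul, φbar_aeval, φbar_v, ← mul_assoc, ← Polynomial.C_mul]
  have h2 := congrArg φbar h
  rw [map_sum, map_zero, Finset.sum_congr rfl (fun S _ => hterm S)] at h2
  have h3 := congrArg (fun q : A => Polynomial.coeff q (∑ i ∈ S₀, 2 ^ i)) h2
  simp only [Polynomial.finset_sum_coeff, Polynomial.coeff_C_mul, Polynomial.coeff_X_pow,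
    Polynomial.coeff_zero, mul_ite, mul_one, mul_zero] at h3
  rw [Finset.sum_eq_single_of_mem S₀ hS₀ (fun T hT hTne => by
    rw [if_neg (fun hc => hTne (by exact (m_inj hc).symm))]), if_pos rfl] at h3
  have hT : (T (∑ i ∈ S₀, (1 - 2 ^ i : ℤ)) : L) ≠ 0 := (isUnit_T _).ne_zero
  have h4 : Polynomial.toLaurent (g S₀) = 0 := by
    rcases mul_eq_zero.mp h3 with h' | h'
    · exact h'
    · exact absurd h' hT
  exact Polynomial.toLaurent_injective (by simpa using h4)

lemma ρR_mul_mem {M : Submodule (Polynomial F2) R} {x : R} (hx : x ∈ M) :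
    ρR * x ∈ M := by
  have : ρR * x = (Polynomial.X : Polynomial F2) • x := by
    rw [smul_def', Polynomial.aeval_X]
  rw [this]
  exact M.smul_mem _ hx

lemma key_r (n : ℕ) : ∀ (S : Finset ℕ), S.card ≤ n → ∀ (i : ℕ),
    Ideal.Quotient.mk Irel (rP i) * v S ∈
      Submodule.span (Polynomial F2) (Set.range v) := by
  induction n with
  | zero =>
    intro S hS i
    rw [Finset.card_eq_zero.mp (Nat.le_zero.mp hS)]
    have : Ideal.Quotient.mk Irel (rP i) * v ∅ = v {i} := by
      simp [v]
    rw [this]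
    exact Submodule.subset_span ⟨{i}, rfl⟩
  | succ n ih =>
    intro S hS i
    by_cases hi : i ∈ S
    · have h1 : (∏ j ∈ S, rP j) = rP i * ∏ j ∈ S.erase i, rP j :=
        (Finset.mul_prod_erase S rP hi).symm
      have h2 : Ideal.Quotient.mk Irel (rP i ^ 2) =
          Ideal.Quotient.mk Irel (ρP * rP (i + 1)) := by
        rw [Ideal.Quotient.mk_eq_mk_iff_sub_mem]
        exact Ideal.subset_span ⟨i, rfl⟩
      have h3 : Ideal.Quotient.mk Irel (rP i) * v S =
          ρR * (Ideal.Quotient.mk Irel (rP (i + 1)) * v (S.erase i)) := by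
        rw [v, v, h1, ρR, map_mul, ← mul_assoc, ← map_mul, ← pow_two, h2, map_mul, mul_assoc]
      rw [h3]
      exact ρR_mul_mem (ih (S.erase i)
        (by
          have := Finset.card_erase_of_mem hi
          omega) (i + 1))
    · have : Ideal.Quotient.mk Irel (rP i) * v S = v (insert i S) := by
        rw [v, v, ← map_mul, Finset.prod_insert hi]
      rw [this]
      exact Submodule.subset_span ⟨insert i S, rfl⟩

lemma mul_gen_mem {x : R} (hx : x ∈ Submodule.span (Polynomial F2) (Set.range v))
    (j : Option ℕ) :
    x * Ideal.Quotient.mk Irel (MvPolynomial.X j) ∈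
      Submodule.span (Polynomial F2) (Set.range v) := by
  induction hx using Submodule.span_induction with
  | mem y hy =>
    obtain ⟨S, rfl⟩ := hy
    cases j with
    | none =>
      rw [mul_comm]
      exact ρR_mul_mem (Submodule.subset_span ⟨S, rfl⟩)
    | some i =>
      rw [mul_comm]
      exact key_r S.card S le_rfl i
  | zero => simp
  | add y z hy hz hy' hz' => rw [add_mul]; exact Submodule.add_mem _ hy' hz'
  | smul c y hy hy' => rw [smul_mul_assoc]; exact Submodule.smul_mem _ _ hy'

lemma span_top : Submodule.span (Polynomial F2) (Set.range v) = ⊤ := by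
  rw [eq_top_iff]
  rintro x -
  obtain ⟨p, rfl⟩ := Ideal.Quotient.mk_surjective (I := Irel) x
  induction p using MvPolynomial.induction_on with
  | C a =>
    have : Ideal.Quotient.mk Irel (MvPolynomial.C a) = (Polynomial.C a) • v ∅ := by
      rw [smul_def', v, Finset.prod_empty, map_one, mul_one, Polynomial.aeval_C]
      rfl
    rw [this]
    exact Submodule.smul_mem _ _ (Submodule.subset_span ⟨∅, rfl⟩)
  | add p q hp hq => rw [map_add]; exact Submodule.add_mem _ hp hq
  | mul_X p j hp => rw [map_mul]; exact mul_gen_mem hp j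

end RFreeAux

/-- `R = F₂[ρ, rᵢ : i ∈ ℕ]/(rᵢ² − ρ·r_{i+1})` is a free `F₂[ρ]`-module, with basis indexed
by the finite subsets `S ⊆ ℕ`, whose `S`-th element is the residue class of `∏_{i∈S} rᵢ`. -/
theorem R_free_over_polynomial_F2 :
    ∃ b : Module.Basis (Finset ℕ) (Polynomial F2) R,
      ∀ S : Finset ℕ, b S = Ideal.Quotient.mk Irel (∏ i ∈ S, rP i) := by
  refine ⟨Module.Basis.mk RFreeAux.li (by rw [RFreeAux.span_top]), fun S => ?_⟩
  rw [Module.Basis.mk_apply]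
  rfl

end
end

section
/- There is an isomorphism of F₂-algebras R ⊗_A B ≅ C that sends (class of ρ)⊗1 to the class of ρ, (class of rᵢ)⊗1 to the class of rᵢ, 1⊗(class of τᵢ) to the class of τᵢ, and 1⊗(class of ξⱼ) to the class of ξⱼ; under this isomorphism the element 1⊗(class of τ) corresponds to the class of ρ·r₀. -/
set_option synthInstance.maxHeartbeats 1000000
set_option maxHeartbeats 1000000

noncomputable section

open scoped TensorProduct

/-- The index set `{j : ℕ // 1 ≤ j}` for the variables `ξⱼ`, `j ≥ 1`. -/
abbrev Ξ := {j : ℕ // 1 ≤ j}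

def rR (i : ℕ) : R := Ideal.Quotient.mk Irel (rP i)

/-! ### The base ring `A = F₂[τ, ρ]` -/

/-- `A = F₂[τ, ρ]`; the variable `0` is `τ` and the variable `1` is `ρ`. -/
abbrev A := MvPolynomial (Fin 2) F2

/-- `R` as an `A`-algebra via `τ ↦ ρ·r₀` and `ρ ↦ ρ`. -/
instance instAR : Algebra A R :=
  (MvPolynomial.aeval ![ρR * rR 0, ρR]).toRingHom.toAlgebra

/-! ### The motivic dual Steenrod algebra
`B = F₂[τ, ρ, τᵢ, ξ_{i+1} : i ≥ 0]/(τᵢ² − τ·ξ_{i+1} − ρ·τ_{i+1} − ρ·τ₀·ξ_{i+1})` -/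

/-- Variables of `B`: `inl ()` is `τ`, `inr (inl ())` is `ρ`, `inr (inr (inl i))` is `τᵢ`,
`inr (inr (inr j))` is `ξⱼ` for `j ≥ 1`. -/
abbrev BVar := Unit ⊕ Unit ⊕ ℕ ⊕ Ξ

abbrev PB := MvPolynomial BVar F2

def τPB : PB := MvPolynomial.X (Sum.inl ())
def ρPB : PB := MvPolynomial.X (Sum.inr (Sum.inl ()))
def τiPB (i : ℕ) : PB := MvPolynomial.X (Sum.inr (Sum.inr (Sum.inl i)))
def ξPB (j : Ξ) : PB := MvPolynomial.X (Sum.inr (Sum.inr (Sum.inr j)))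

/-- The ideal `(τᵢ² − τ·ξ_{i+1} − ρ·τ_{i+1} − ρ·τ₀·ξ_{i+1} : i ∈ ℕ)`. -/
def JB : Ideal PB :=
  Ideal.span (Set.range fun i : ℕ =>
    τiPB i ^ 2 - τPB * ξPB ⟨i + 1, Nat.succ_le_succ (Nat.zero_le i)⟩
      - ρPB * τiPB (i + 1) - ρPB * τiPB 0 * ξPB ⟨i + 1, Nat.succ_le_succ (Nat.zero_le i)⟩)

abbrev B := PB ⧸ JB

def τB : B := Ideal.Quotient.mk JB τPB
def ρB : B := Ideal.Quotient.mk JB ρPB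
def τiB (i : ℕ) : B := Ideal.Quotient.mk JB (τiPB i)
def ξB (j : Ξ) : B := Ideal.Quotient.mk JB (ξPB j)

/-- `B` as an `A`-algebra via `τ ↦ τ` and `ρ ↦ ρ`. -/
instance instAB : Algebra A B :=
  (MvPolynomial.aeval ![τB, ρB]).toRingHom.toAlgebra

/-! ### The isotropic dual Steenrod algebra
`C = F₂[ρ, rᵢ, τᵢ, ξ_{i+1} : i ≥ 0]/(rᵢ² − ρ·r_{i+1}, τᵢ² − ρ·τ_{i+1} − ρ·(r₀+τ₀)·ξ_{i+1})` -/

/-- Variables of `C`: `inl ()` is `ρ`, `inr (inl i)` is `rᵢ`, `inr (inr (inl i))` is `τᵢ`,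
`inr (inr (inr j))` is `ξⱼ` for `j ≥ 1`. -/
abbrev CVar := Unit ⊕ ℕ ⊕ ℕ ⊕ Ξ

abbrev PC := MvPolynomial CVar F2

def ρPC : PC := MvPolynomial.X (Sum.inl ())
def rPC (i : ℕ) : PC := MvPolynomial.X (Sum.inr (Sum.inl i))
def τiPC (i : ℕ) : PC := MvPolynomial.X (Sum.inr (Sum.inr (Sum.inl i)))
def ξPC (j : Ξ) : PC := MvPolynomial.X (Sum.inr (Sum.inr (Sum.inr j)))

/-- The ideal of relations of `C`. -/
def JC : Ideal PC :=
  Ideal.span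
    ((Set.range fun i : ℕ => rPC i ^ 2 - ρPC * rPC (i + 1)) ∪
      Set.range fun i : ℕ =>
        τiPC i ^ 2 - ρPC * τiPC (i + 1)
          - ρPC * (rPC 0 + τiPC 0) * ξPC ⟨i + 1, Nat.succ_le_succ (Nat.zero_le i)⟩)

abbrev C := PC ⧸ JC

def ρC : C := Ideal.Quotient.mk JC ρPC
def rC (i : ℕ) : C := Ideal.Quotient.mk JC (rPC i)
def τiC (i : ℕ) : C := Ideal.Quotient.mk JC (τiPC i)
def ξC (j : Ξ) : C := Ideal.Quotient.mk JC (ξPC j)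

instance : IsScalarTower F2 A R :=
  IsScalarTower.of_algebraMap_eq fun x =>
    ((MvPolynomial.aeval (R := F2) ![ρR * rR 0, ρR]).commutes x).symm

instance : SMulCommClass A F2 R :=
  ⟨fun a c x => by
    rw [Algebra.smul_def, Algebra.smul_def (A := R) c, Algebra.smul_def,
      Algebra.smul_def (A := R) c, mul_left_comm]⟩

/-! ### Auxiliary development for the proof -/

/-- `C` as an `A`-algebra via `τ ↦ ρ·r₀` and `ρ ↦ ρ`. -/
noncomputable instance instAC : Algebra A C :=
  (MvPolynomial.aeval ![ρC * rC 0, ρC]).toRingHom.toAlgebra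

instance : IsScalarTower F2 A C :=
  IsScalarTower.of_algebraMap_eq fun x =>
    ((MvPolynomial.aeval (R := F2) ![ρC * rC 0, ρC]).commutes x).symm

lemma algR_X0 : algebraMap A R (MvPolynomial.X 0) = ρR * rR 0 := by
  show MvPolynomial.aeval ![ρR * rR 0, ρR] (MvPolynomial.X 0) = _
  simp

lemma algR_X1 : algebraMap A R (MvPolynomial.X 1) = ρR := by
  show MvPolynomial.aeval ![ρR * rR 0, ρR] (MvPolynomial.X 1) = _
  simp

lemma algB_X0 : algebraMap A B (MvPolynomial.X 0) = τB := by
  show MvPolynomial.aeval ![τB, ρB] (MvPolynomial.X 0) = _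
  simp

lemma algB_X1 : algebraMap A B (MvPolynomial.X 1) = ρB := by
  show MvPolynomial.aeval ![τB, ρB] (MvPolynomial.X 1) = _
  simp

lemma algC_X0 : algebraMap A C (MvPolynomial.X 0) = ρC * rC 0 := by
  show MvPolynomial.aeval ![ρC * rC 0, ρC] (MvPolynomial.X 0) = _
  simp

lemma algC_X1 : algebraMap A C (MvPolynomial.X 1) = ρC := by
  show MvPolynomial.aeval ![ρC * rC 0, ρC] (MvPolynomial.X 1) = _
  simp

lemma rR_rel (i : ℕ) : rR i ^ 2 - ρR * rR (i + 1) = 0 := by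
  rw [rR, rR, ρR, ← map_pow, ← map_mul, ← map_sub, Ideal.Quotient.eq_zero_iff_mem]
  exact Ideal.subset_span ⟨i, rfl⟩

lemma τB_rel (i : ℕ) :
    τiB i ^ 2 - τB * ξB ⟨i + 1, Nat.succ_le_succ (Nat.zero_le i)⟩
      - ρB * τiB (i + 1) - ρB * τiB 0 * ξB ⟨i + 1, Nat.succ_le_succ (Nat.zero_le i)⟩ = 0 := by
  rw [τiB, τiB, τiB, τB, ρB, ξB]
  rw [← map_pow, ← map_mul, ← map_mul, ← map_mul, ← map_mul, ← map_sub, ← map_sub, ← map_sub,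
    Ideal.Quotient.eq_zero_iff_mem]
  exact Ideal.subset_span ⟨i, rfl⟩

lemma rC_rel (i : ℕ) : rC i ^ 2 - ρC * rC (i + 1) = 0 := by
  rw [rC, rC, ρC, ← map_pow, ← map_mul, ← map_sub, Ideal.Quotient.eq_zero_iff_mem]
  exact Ideal.subset_span (Or.inl ⟨i, rfl⟩)

lemma τC_rel (i : ℕ) :
    τiC i ^ 2 - ρC * τiC (i + 1)
      - ρC * (rC 0 + τiC 0) * ξC ⟨i + 1, Nat.succ_le_succ (Nat.zero_le i)⟩ = 0 := by
  rw [τiC, τiC, τiC, rC, ρC, ξC]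
  rw [← map_pow, ← map_mul, ← map_add, ← map_mul, ← map_mul, ← map_sub, ← map_sub,
    Ideal.Quotient.eq_zero_iff_mem]
  exact Ideal.subset_span (Or.inr ⟨i, rfl⟩)

/-- Generators for the map `P → C`. -/
noncomputable def fPgen : Option ℕ → C
  | none => ρC
  | some i => rC i

/-- The map `R → C`. -/
noncomputable def fR : R →ₐ[F2] C :=
  Ideal.Quotient.liftₐ Irel (MvPolynomial.aeval fPgen) (by
    have h : Irel ≤ RingHom.ker (MvPolynomial.aeval (R := F2) fPgen).toRingHom := by
      rw [Irel, Ideal.span_le]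
      rintro _ ⟨i, rfl⟩
      simp only [SetLike.mem_coe, RingHom.mem_ker, AlgHom.toRingHom_eq_coe, RingHom.coe_coe,
        map_sub, map_mul, map_pow, rP, ρP, MvPolynomial.aeval_X, fPgen]
      exact rC_rel i
    intro a ha
    exact (show _ = 0 from h ha))

lemma fR_ρ : fR ρR = ρC := by
  rw [ρR, fR, Ideal.Quotient.liftₐ_apply]
  erw [Ideal.Quotient.lift_mk]
  rw [ρP]
  simp [fPgen]

lemma fR_r (i : ℕ) : fR (rR i) = rC i := by
  rw [rR, fR, Ideal.Quotient.liftₐ_apply]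
  erw [Ideal.Quotient.lift_mk]
  rw [rP]
  simp [fPgen]

/-- Generators for the map `PB → C`. -/
noncomputable def fBgen : BVar → C
  | Sum.inl _ => ρC * rC 0
  | Sum.inr (Sum.inl _) => ρC
  | Sum.inr (Sum.inr (Sum.inl i)) => τiC i
  | Sum.inr (Sum.inr (Sum.inr j)) => ξC j

/-- The map `B → C`. -/
noncomputable def fB : B →ₐ[F2] C :=
  Ideal.Quotient.liftₐ JB (MvPolynomial.aeval fBgen) (by
    have h : JB ≤ RingHom.ker (MvPolynomial.aeval (R := F2) fBgen).toRingHom := by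
      rw [JB, Ideal.span_le]
      rintro _ ⟨i, rfl⟩
      simp only [SetLike.mem_coe, RingHom.mem_ker, AlgHom.toRingHom_eq_coe, RingHom.coe_coe,
        map_sub, map_mul, map_pow, τiPB, τPB, ρPB, ξPB, MvPolynomial.aeval_X, fBgen]
      have := τC_rel i
      linear_combination this
    intro a ha
    exact (show _ = 0 from h ha))

lemma fB_τ : fB τB = ρC * rC 0 := by
  rw [τB, fB, Ideal.Quotient.liftₐ_apply]
  erw [Ideal.Quotient.lift_mk]
  rw [τPB]
  simp [fBgen]

lemma fB_ρ : fB ρB = ρC := by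
  rw [ρB, fB, Ideal.Quotient.liftₐ_apply]
  erw [Ideal.Quotient.lift_mk]
  rw [ρPB]
  simp [fBgen]

lemma fB_τi (i : ℕ) : fB (τiB i) = τiC i := by
  rw [τiB, fB, Ideal.Quotient.liftₐ_apply]
  erw [Ideal.Quotient.lift_mk]
  rw [τiPB]
  simp [fBgen]

lemma fB_ξ (j : Ξ) : fB (ξB j) = ξC j := by
  rw [ξB, fB, Ideal.Quotient.liftₐ_apply]
  erw [Ideal.Quotient.lift_mk]
  rw [ξPB]
  simp [fBgen]

/-- `fR` as an `A`-algebra map. -/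
noncomputable def fRA : R →ₐ[A] C :=
  { fR with
    commutes' := fun a => by
      show fR (algebraMap A R a) = algebraMap A C a
      have : (fR.comp (MvPolynomial.aeval (R := F2) ![ρR * rR 0, ρR] : A →ₐ[F2] R))
          = (MvPolynomial.aeval (R := F2) ![ρC * rC 0, ρC] : A →ₐ[F2] C) := by
        apply MvPolynomial.algHom_ext
        intro i
        fin_cases i <;>
          simp [map_mul, fR_ρ, fR_r]
      exact DFunLike.congr_fun this a }

/-- `fB` as an `A`-algebra map. -/
noncomputable def fBA : B →ₐ[A] C :=
  { fB with
    commutes' := fun a => by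
      show fB (algebraMap A B a) = algebraMap A C a
      have : (fB.comp (MvPolynomial.aeval (R := F2) ![τB, ρB] : A →ₐ[F2] B))
          = (MvPolynomial.aeval (R := F2) ![ρC * rC 0, ρC] : A →ₐ[F2] C) := by
        apply MvPolynomial.algHom_ext
        intro i
        fin_cases i <;>
          simp [fB_τ, fB_ρ]
      exact DFunLike.congr_fun this a }

/-- The forward map. -/
instance : SMulCommClass A A R :=
  ⟨fun a b x => by simp only [Algebra.smul_def, mul_left_comm]⟩

instance : IsScalarTower A A R :=
  ⟨fun a b x => by simp only [smul_eq_mul, Algebra.smul_def, map_mul, mul_assoc]⟩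

noncomputable def Fmap : (R ⊗[A] B) →ₐ[A] C :=
  Algebra.TensorProduct.productMap fRA fBA

lemma tmul_alg (a : A) (x : B) :
    (algebraMap A R a) ⊗ₜ[A] x = (1 : R) ⊗ₜ[A] (algebraMap A B a * x) := by
  have h : (algebraMap A R a) ⊗ₜ[A] (1 : B) = (1 : R) ⊗ₜ[A] (algebraMap A B a) := by
    have h1 : algebraMap A (R ⊗[A] B) a = (algebraMap A R a) ⊗ₜ[A] (1 : B) :=
      Algebra.TensorProduct.algebraMap_apply a
    rw [← h1, Algebra.TensorProduct.algebraMap_apply']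
  calc (algebraMap A R a) ⊗ₜ[A] x
      = ((algebraMap A R a) ⊗ₜ[A] (1 : B)) * ((1 : R) ⊗ₜ[A] x) := by
        rw [Algebra.TensorProduct.tmul_mul_tmul, mul_one, one_mul]
    _ = ((1 : R) ⊗ₜ[A] (algebraMap A B a)) * ((1 : R) ⊗ₜ[A] x) := by rw [h]
    _ = (1 : R) ⊗ₜ[A] (algebraMap A B a * x) := by
        rw [Algebra.TensorProduct.tmul_mul_tmul, mul_one]

lemma ρ_tmul (x : B) : ρR ⊗ₜ[A] x = (1 : R) ⊗ₜ[A] (ρB * x) := by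
  rw [← algR_X1, tmul_alg, algB_X1]

lemma τ_tmul (x : B) : (ρR * rR 0) ⊗ₜ[A] x = (1 : R) ⊗ₜ[A] (τB * x) := by
  rw [← algR_X0, tmul_alg, algB_X0]

/-- Generators for the map `PC → R ⊗[A] B`. -/
noncomputable def gGen : CVar → R ⊗[A] B
  | Sum.inl _ => ρR ⊗ₜ 1
  | Sum.inr (Sum.inl i) => rR i ⊗ₜ 1
  | Sum.inr (Sum.inr (Sum.inl i)) => 1 ⊗ₜ τiB i
  | Sum.inr (Sum.inr (Sum.inr j)) => 1 ⊗ₜ ξB j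

/-- The backward map out of `C`. -/
noncomputable def Gmap : C →ₐ[F2] R ⊗[A] B :=
  Ideal.Quotient.liftₐ JC (MvPolynomial.aeval gGen) (by
    have h : JC ≤ RingHom.ker (MvPolynomial.aeval (R := F2) gGen).toRingHom := by
      rw [JC, Ideal.span_le]
      rintro _ (⟨i, rfl⟩ | ⟨i, rfl⟩) <;>
        simp only [SetLike.mem_coe, RingHom.mem_ker, AlgHom.toRingHom_eq_coe, RingHom.coe_coe,
          map_sub, map_add, map_mul, map_pow, rPC, ρPC, τiPC, ξPC, MvPolynomial.aeval_X, gGen]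
      · rw [Algebra.TensorProduct.tmul_pow, Algebra.TensorProduct.tmul_mul_tmul, one_pow, mul_one,
          ← TensorProduct.sub_tmul, rR_rel, TensorProduct.zero_tmul]
      · simp only [one_pow, mul_one, one_mul, mul_add, add_mul,
          Algebra.TensorProduct.tmul_pow, Algebra.TensorProduct.tmul_mul_tmul]
        rw [show ∀ a b c d : R ⊗[A] B, a * (b + c) * d = a * b * d + a * c * d from
          fun a b c d => by ring]
        simp only [one_mul, mul_one, Algebra.TensorProduct.tmul_mul_tmul]
        rw [τ_tmul, ρ_tmul, ρ_tmul, ← TensorProduct.tmul_add, ← TensorProduct.tmul_sub,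
          ← TensorProduct.tmul_sub]
        rw [show τiB i ^ 2 - ρB * τiB (i + 1) -
            (τB * ξB ⟨i + 1, Nat.succ_le_succ (Nat.zero_le i)⟩ +
              ρB * (τiB 0 * ξB ⟨i + 1, Nat.succ_le_succ (Nat.zero_le i)⟩)) = 0 by
          linear_combination τB_rel i]
        rw [TensorProduct.tmul_zero]
    intro a ha
    exact (show _ = 0 from h ha))

lemma G_ρ : Gmap ρC = ρR ⊗ₜ 1 := by
  rw [ρC, Gmap, Ideal.Quotient.liftₐ_apply]
  erw [Ideal.Quotient.lift_mk]
  rw [ρPC]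
  simp [gGen]

lemma G_r (i : ℕ) : Gmap (rC i) = rR i ⊗ₜ 1 := by
  rw [rC, Gmap, Ideal.Quotient.liftₐ_apply]
  erw [Ideal.Quotient.lift_mk]
  rw [rPC]
  simp [gGen]

lemma G_τi (i : ℕ) : Gmap (τiC i) = 1 ⊗ₜ τiB i := by
  rw [τiC, Gmap, Ideal.Quotient.liftₐ_apply]
  erw [Ideal.Quotient.lift_mk]
  rw [τiPC]
  simp [gGen]

lemma G_ξ (j : Ξ) : Gmap (ξC j) = 1 ⊗ₜ ξB j := by
  rw [ξC, Gmap, Ideal.Quotient.liftₐ_apply]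
  erw [Ideal.Quotient.lift_mk]
  rw [ξPC]
  simp [gGen]

/-- `Gmap` as an `A`-algebra map. -/
noncomputable def GmapA : C →ₐ[A] R ⊗[A] B :=
  { Gmap with
    commutes' := fun a => by
      show Gmap (algebraMap A C a) = algebraMap A (R ⊗[A] B) a
      have h1 : algebraMap A (R ⊗[A] B) a = (algebraMap A R a) ⊗ₜ 1 :=
        Algebra.TensorProduct.algebraMap_apply a
      have : (Gmap.comp (MvPolynomial.aeval (R := F2) ![ρC * rC 0, ρC] : A →ₐ[F2] C))
          = (Algebra.TensorProduct.includeLeft (S := F2) :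
              R →ₐ[F2] R ⊗[A] B).comp (MvPolynomial.aeval (R := F2) ![ρR * rR 0, ρR]) := by
        apply MvPolynomial.algHom_ext
        intro i
        fin_cases i <;>
          simp [map_mul, G_ρ, G_r, Algebra.TensorProduct.tmul_mul_tmul]
      have h2 := DFunLike.congr_fun this a
      simp only [AlgHom.coe_comp, Function.comp_apply, AlgHom.coe_restrictScalars'] at h2 ⊢
      rw [show algebraMap A C a = MvPolynomial.aeval ![ρC * rC 0, ρC] a from rfl, h2, h1]
      rfl }

lemma FG : (Fmap.restrictScalars F2).comp Gmap = AlgHom.id F2 C := by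
  apply Ideal.Quotient.algHom_ext
  apply MvPolynomial.algHom_ext
  intro v
  obtain (_ | i | i | j) := v <;>
    simp only [AlgHom.coe_comp, Ideal.Quotient.mkₐ_eq_mk, Function.comp_apply,
      MvPolynomial.aeval_X, AlgHom.coe_restrictScalars', AlgHom.coe_id, id_eq]
  · show Fmap (Gmap ρC) = ρC
    rw [G_ρ, Fmap, Algebra.TensorProduct.productMap_apply_tmul, map_one, mul_one]
    exact fR_ρ
  · show Fmap (Gmap (rC i)) = rC i
    rw [G_r, Fmap, Algebra.TensorProduct.productMap_apply_tmul, map_one, mul_one]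
    exact fR_r i
  · show Fmap (Gmap (τiC i)) = τiC i
    rw [G_τi, Fmap, Algebra.TensorProduct.productMap_apply_tmul, map_one, one_mul]
    exact fB_τi i
  · show Fmap (Gmap (ξC j)) = ξC j
    rw [G_ξ, Fmap, Algebra.TensorProduct.productMap_apply_tmul, map_one, one_mul]
    exact fB_ξ j

lemma GF : GmapA.comp Fmap = AlgHom.id A (R ⊗[A] B) := by
  apply Algebra.TensorProduct.ext
  · apply AlgHom.restrictScalars_injective F2
    apply Ideal.Quotient.algHom_ext
    apply MvPolynomial.algHom_ext
    intro v
    obtain (_ | i) := v <;>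
      simp only [AlgHom.coe_comp, Ideal.Quotient.mkₐ_eq_mk, Function.comp_apply,
        MvPolynomial.aeval_X, AlgHom.coe_restrictScalars']
    · show GmapA (Fmap (ρR ⊗ₜ 1)) = (ρR ⊗ₜ 1 : R ⊗[A] B)
      rw [Fmap, Algebra.TensorProduct.productMap_apply_tmul, map_one, mul_one]
      show Gmap (fRA ρR) = ρR ⊗ₜ 1
      show Gmap (fR ρR) = ρR ⊗ₜ 1
      rw [fR_ρ, G_ρ]
    · show GmapA (Fmap (rR i ⊗ₜ 1)) = (rR i ⊗ₜ 1 : R ⊗[A] B)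
      rw [Fmap, Algebra.TensorProduct.productMap_apply_tmul, map_one, mul_one]
      show Gmap (fR (rR i)) = rR i ⊗ₜ 1
      rw [fR_r, G_r]
  · apply AlgHom.restrictScalars_injective F2
    apply Ideal.Quotient.algHom_ext
    apply MvPolynomial.algHom_ext
    intro v
    obtain (_ | _ | i | j) := v <;>
      simp only [AlgHom.coe_comp, Ideal.Quotient.mkₐ_eq_mk, Function.comp_apply,
        MvPolynomial.aeval_X, AlgHom.coe_restrictScalars']
    · show GmapA (Fmap (1 ⊗ₜ τB)) = (1 : R) ⊗ₜ τB
      rw [Fmap, Algebra.TensorProduct.productMap_apply_tmul, map_one, one_mul]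
      show Gmap (fB τB) = (1 : R) ⊗ₜ τB
      rw [fB_τ, map_mul, G_ρ, G_r, Algebra.TensorProduct.tmul_mul_tmul, mul_one]
      rw [τ_tmul, mul_one]
    · show GmapA (Fmap (1 ⊗ₜ ρB)) = (1 : R) ⊗ₜ ρB
      rw [Fmap, Algebra.TensorProduct.productMap_apply_tmul, map_one, one_mul]
      show Gmap (fB ρB) = (1 : R) ⊗ₜ ρB
      rw [fB_ρ, G_ρ, ρ_tmul, mul_one]
    · show GmapA (Fmap (1 ⊗ₜ τiB i)) = (1 : R) ⊗ₜ τiB i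
      rw [Fmap, Algebra.TensorProduct.productMap_apply_tmul, map_one, one_mul]
      show Gmap (fB (τiB i)) = (1 : R) ⊗ₜ τiB i
      rw [fB_τi, G_τi]
    · show GmapA (Fmap (1 ⊗ₜ ξB j)) = (1 : R) ⊗ₜ ξB j
      rw [Fmap, Algebra.TensorProduct.productMap_apply_tmul, map_one, one_mul]
      show Gmap (fB (ξB j)) = (1 : R) ⊗ₜ ξB j
      rw [fB_ξ, G_ξ]

/-- The `A`-algebra isomorphism. -/
noncomputable def EA : (R ⊗[A] B) ≃ₐ[A] C :=
  AlgEquiv.ofAlgHom Fmap GmapA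
    (by
      apply AlgHom.restrictScalars_injective F2
      ext x
      have := DFunLike.congr_fun FG x
      exact (by simpa using this : Fmap (Gmap x) = x))
    GF
/-- There is an isomorphism of `F₂`-algebras `R ⊗_A B ≅ C` sending `ρ⊗1 ↦ ρ`, `rᵢ⊗1 ↦ rᵢ`,
`1⊗τᵢ ↦ τᵢ`, `1⊗ξⱼ ↦ ξⱼ`, under which `1⊗τ` corresponds to `ρ·r₀`. -/
theorem tensor_iso_isotropic_dual_steenrod :
    ∃ e : (R ⊗[A] B) ≃ₐ[F2] C,
      e (ρR ⊗ₜ 1) = ρC ∧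
      (∀ i : ℕ, e (rR i ⊗ₜ 1) = rC i) ∧
      (∀ i : ℕ, e (1 ⊗ₜ τiB i) = τiC i) ∧
      (∀ j : Ξ, e (1 ⊗ₜ ξB j) = ξC j) ∧
      e (1 ⊗ₜ τB) = ρC * rC 0 := by
  refine ⟨EA.restrictScalars F2, ?_, ?_, ?_, ?_, ?_⟩
  · show Fmap (ρR ⊗ₜ 1) = ρC
    rw [Fmap, Algebra.TensorProduct.productMap_apply_tmul, map_one, mul_one]
    exact fR_ρ
  · intro i
    show Fmap (rR i ⊗ₜ 1) = rC i
    rw [Fmap, Algebra.TensorProduct.productMap_apply_tmul, map_one, mul_one]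
    exact fR_r i
  · intro i
    show Fmap (1 ⊗ₜ τiB i) = τiC i
    rw [Fmap, Algebra.TensorProduct.productMap_apply_tmul, map_one, one_mul]
    exact fB_τi i
  · intro j
    show Fmap (1 ⊗ₜ ξB j) = ξC j
    rw [Fmap, Algebra.TensorProduct.productMap_apply_tmul, map_one, one_mul]
    exact fB_ξ j
  · show Fmap (1 ⊗ₜ τB) = ρC * rC 0
    rw [Fmap, Algebra.TensorProduct.productMap_apply_tmul, map_one, one_mul]
    exact fB_τ

end
end
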